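/- Let A be a finitely generated cancellative pointed commutative monoid. Then the normalization A_nor is finitely generated as a monoid; consequently A → A_nor is a finite morphism. -/

import Mathlib

/-- The normalization of `A` inside an ambient commutative monoid with zero
(its pointed group completion): all elements with a power (`n ≥ 1`) in `A`. -/
def monNor {G : Type*} [CommMonoidWithZero G] (A : Set G) : Set G :=
  {g : G | ∃ n : ℕ, 1 ≤ n ∧ g ^ n ∈ A}

open Finset

section Epow
variable {G : Type*} [CommGroupWithZero G] {κ : Type*} [Fintype κ]

noncomputable def Epow (a : κ → G) (c : κ → ℤ) : G := ∏ i, a i ^ c i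

variable {a : κ → G}

lemma Epow_ne_zero (ha : ∀ i, a i ≠ 0) (c : κ → ℤ) : Epow a c ≠ 0 :=
  Finset.prod_ne_zero_iff.2 fun i _ => zpow_ne_zero _ (ha i)

lemma Epow_add (ha : ∀ i, a i ≠ 0) (c d : κ → ℤ) :
    Epow a (c + d) = Epow a c * Epow a d := by
  simp only [Epow, ← Finset.prod_mul_distrib]
  exact Finset.prod_congr rfl fun i _ => zpow_add₀ (ha i) _ _

lemma Epow_zero : Epow a 0 = 1 := by simp [Epow]

lemma Epow_zsmul (c : κ → ℤ) (z : ℤ) : Epow a (z • c) = (Epow a c) ^ z := by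
  simp only [Epow, ← Finset.prod_zpow]
  exact Finset.prod_congr rfl fun i _ => by
    rw [Pi.smul_apply, smul_eq_mul, mul_comm, zpow_mul]

lemma Epow_sub (ha : ∀ i, a i ≠ 0) (c d : κ → ℤ) :
    Epow a (c - d) = Epow a c * (Epow a d)⁻¹ := by
  have := Epow_add ha (c - d) d
  simp only [sub_add_cancel] at this
  rw [this, mul_assoc, mul_inv_cancel₀ (Epow_ne_zero ha d), mul_one]

lemma Epow_pow (c : κ → ℤ) (n : ℕ) : Epow a c ^ n = Epow a ((n : ℤ) • c) := by
  rw [Epow_zsmul, zpow_natCast]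

lemma Epow_nat (m : κ → ℕ) : Epow a (fun i => (m i : ℤ)) = ∏ i, a i ^ m i := by
  simp [Epow, zpow_natCast]

lemma Epow_single_pow (c : κ → ℤ) [DecidableEq κ] (j : κ) :
    Epow a (Pi.single j (1:ℤ)) = a j := by
  simp only [Epow]
  rw [Fintype.prod_eq_single j (fun i hi => by simp [Pi.single_eq_of_ne hi])]
  simp

lemma Epow_sum (ha : ∀ i, a i ≠ 0) {α : Type*} (T : Finset α) (g : α → κ → ℤ) :
    Epow a (∑ x ∈ T, g x) = ∏ x ∈ T, Epow a (g x) := by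
  induction T using Finset.cons_induction with
  | empty => simp [Epow_zero]
  | cons x T hx ih => rw [Finset.sum_cons, Finset.prod_cons, Epow_add ha, ih]

end Epow

open Finset

section Helpers
variable {G : Type*} [CommMonoidWithZero G]

lemma monNor_mul {A : Submonoid G} {x y : G}
    (hx : x ∈ monNor (A : Set G)) (hy : y ∈ monNor (A : Set G)) :
    x * y ∈ monNor (A : Set G) := by
  obtain ⟨n, hn, hxn⟩ := hx
  obtain ⟨m, hm, hym⟩ := hy
  refine ⟨n * m, Nat.one_le_iff_ne_zero.2 (by positivity), ?_⟩
  rw [mul_pow, pow_mul, pow_mul']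
  exact A.mul_mem (A.pow_mem hxn m) (A.pow_mem hym n)

lemma mem_monNor_of_mem {A : Submonoid G} {x : G} (hx : x ∈ A) :
    x ∈ monNor (A : Set G) := ⟨1, le_refl 1, by simpa using hx⟩

/-- `monNor` of a submonoid, as a submonoid. -/
def norSub (A : Submonoid G) : Submonoid G where
  carrier := monNor (A : Set G)
  one_mem' := mem_monNor_of_mem A.one_mem
  mul_mem' := monNor_mul

lemma mem_norSub {A : Submonoid G} {x : G} :
    x ∈ norSub A ↔ x ∈ monNor (A : Set G) := Iff.rfl

end Helpers

lemma zpow_reduce {G : Type*} [GroupWithZero G] {g : G} {M : ℕ} (hM : 1 ≤ M)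
    (h : g ^ M = 1) (z : ℤ) : g ^ z = g ^ (z % M).toNat := by
  have hg : g ≠ 0 := by
    rintro rfl
    rw [zero_pow (by omega)] at h
    exact zero_ne_one h
  have hM0 : (M : ℤ) ≠ 0 := by exact_mod_cast Nat.one_le_iff_ne_zero.1 hM
  have hnn : 0 ≤ z % M := Int.emod_nonneg z hM0
  calc g ^ z = g ^ (z % M + M * (z / M)) := by rw [Int.emod_add_mul_ediv]
    _ = g ^ (z % M) * (g ^ (M : ℤ)) ^ (z / M) := by rw [zpow_add₀ hg, zpow_mul]
    _ = g ^ (z % M) := by rw [zpow_natCast, h, one_zpow, mul_one]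
    _ = g ^ (z % M).toNat := by rw [← zpow_natCast, Int.toNat_of_nonneg hnn]

section SatRel
variable {G : Type*} [CommGroupWithZero G] {κ : Type*} [Fintype κ]

/-- The saturation of the relation lattice: exponent vectors `c` such that some positive
power of `Epow a c` is `1`. -/
def satRel (a : κ → G) (ha : ∀ i, a i ≠ 0) : Submodule ℤ (κ → ℤ) where
  carrier := {c | ∃ N : ℕ, 1 ≤ N ∧ Epow a c ^ N = 1}
  zero_mem' := ⟨1, le_refl 1, by simp [Epow_zero]⟩
  add_mem' := by
    rintro c d ⟨N, hN, hcN⟩ ⟨M, hM, hdM⟩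
    refine ⟨N * M, Nat.one_le_iff_ne_zero.2 (by positivity), ?_⟩
    rw [Epow_add ha, mul_pow, pow_mul, hcN, one_pow, pow_mul', hdM, one_pow, one_mul]
  smul_mem' := by
    rintro z c ⟨N, hN, hcN⟩
    refine ⟨N, hN, ?_⟩
    rw [Epow_zsmul, ← zpow_natCast ((Epow a c) ^ z), ← zpow_mul, mul_comm, zpow_mul,
      zpow_natCast, hcN, one_zpow]

lemma mem_satRel {a : κ → G} {ha : ∀ i, a i ≠ 0} {c : κ → ℤ} :
    c ∈ satRel a ha ↔ ∃ N : ℕ, 1 ≤ N ∧ Epow a c ^ N = 1 := Iff.rfl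

lemma noZeroSMulDivisors_satRel (a : κ → G) (ha : ∀ i, a i ≠ 0) :
    NoZeroSMulDivisors ℤ ((κ → ℤ) ⧸ satRel a ha) := by
  constructor
  intro z q hzq
  by_cases hz : z = 0
  · exact Or.inl hz
  right
  obtain ⟨c, rfl⟩ := Submodule.Quotient.mk_surjective _ q
  rw [← Submodule.Quotient.mk_smul, Submodule.Quotient.mk_eq_zero] at hzq
  rw [Submodule.Quotient.mk_eq_zero]
  obtain ⟨N, hN, hcN⟩ := hzq
  rw [Epow_zsmul, ← zpow_natCast ((Epow a c) ^ z), ← zpow_mul] at hcN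
  refine ⟨z.natAbs * N, Nat.one_le_iff_ne_zero.2 (by positivity), ?_⟩
  rw [← zpow_natCast (Epow a c)]
  obtain ⟨n, rfl | rfl⟩ : ∃ n : ℕ, z = n ∨ z = -n := ⟨z.natAbs, Int.natAbs_eq z⟩
  · have h2 : ((((n : ℤ)).natAbs * N : ℕ) : ℤ) = (n : ℤ) * N := by
      simp
    rw [h2]
    exact hcN
  · have h3 : Epow a c ^ ((n : ℤ) * (N : ℤ)) = 1 := by
      rw [show ((n : ℤ) * (N : ℤ)) = -((-(n:ℤ)) * N) by ring, zpow_neg, hcN, inv_one]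
    have h2 : ((((-n : ℤ)).natAbs * N : ℕ) : ℤ) = (n : ℤ) * (N : ℤ) := by
      simp
    rw [h2]
    exact h3

end SatRel


section Gordan
variable {ι κ : Type*} [Fintype ι] [Fintype κ]

lemma gordan (v : κ → (ι → ℤ)) :
    ∃ D : Finset (ι → ℤ),
      (∀ q ∈ D, ∃ n : ℕ, 1 ≤ n ∧ ∃ m : κ → ℕ, (n : ℤ) • q = ∑ i, (m i : ℤ) • v i) ∧
      (∀ (q : ι → ℤ) (n : ℕ), 1 ≤ n → ∀ m : κ → ℕ,
        ((n : ℤ) • q = ∑ i, (m i : ℤ) • v i) →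
        ∃ r ∈ D, ∃ f : κ → ℕ, q = r + ∑ i, (f i : ℤ) • v i) := by
  classical
  set Dset : Set (ι → ℤ) :=
    {q | ∃ lam : κ → ℚ, (∀ i, 0 ≤ lam i ∧ lam i ≤ 1) ∧
      ∀ j, (q j : ℚ) = ∑ i, lam i * (v i j : ℚ)} with hDset
  -- finiteness
  have hfin : Dset.Finite := by
    set C : ι → ℤ := fun j => ∑ i, |v i j| with hC
    apply Set.Finite.subset (Finset.Icc (-C) C).finite_toSet
    rintro q ⟨lam, hlam, hco⟩
    have hb : ∀ j, -C j ≤ q j ∧ q j ≤ C j := by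
      intro j
      have habs : |(q j : ℚ)| ≤ (C j : ℚ) := by
        rw [hco j]
        calc |∑ i, lam i * (v i j : ℚ)| ≤ ∑ i, |lam i * (v i j : ℚ)| :=
              Finset.abs_sum_le_sum_abs _ _
          _ ≤ ∑ i, |(v i j : ℚ)| := by
              refine Finset.sum_le_sum fun i _ => ?_
              rw [abs_mul]
              calc |lam i| * |(v i j : ℚ)| ≤ 1 * |(v i j : ℚ)| := by
                    have := (hlam i)
                    have h1 : |lam i| ≤ 1 := abs_le.2 ⟨by linarith [this.1], this.2⟩
                    exact mul_le_mul_of_nonneg_right h1 (abs_nonneg _)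
                _ = |(v i j : ℚ)| := one_mul _
          _ = (C j : ℚ) := by rw [hC]; push_cast; rfl
      have h2 := abs_le.1 habs
      constructor
      · exact_mod_cast h2.1
      · exact_mod_cast h2.2
    rw [Finset.coe_Icc, Set.mem_Icc]
    exact ⟨fun j => (hb j).1, fun j => (hb j).2⟩
  refine ⟨hfin.toFinset, ?_, ?_⟩
  · -- each element of D is in the saturation
    intro q hq
    rw [Set.Finite.mem_toFinset] at hq
    obtain ⟨lam, hlam, hco⟩ := hq
    set N : ℕ := ∏ i, (lam i).den with hN
    have hN1 : 1 ≤ N := Nat.one_le_iff_ne_zero.2 <| Finset.prod_ne_zero_iff.2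
      fun i _ => (lam i).den_nz
    set m : κ → ℕ := fun i => (N / (lam i).den) * (lam i).num.toNat with hm
    have hmQ : ∀ i, (m i : ℚ) = N * lam i := by
      intro i
      have hdvd : (lam i).den ∣ N := Finset.dvd_prod_of_mem _ (Finset.mem_univ i)
      have hc : (N / (lam i).den) * (lam i).den = N := Nat.div_mul_cancel hdvd
      have hnum : ((lam i).num.toNat : ℚ) = ((lam i).num : ℚ) := by
        have := Int.toNat_of_nonneg (Rat.num_nonneg.2 (hlam i).1)
        exact_mod_cast congrArg (Int.cast : ℤ → ℚ) this
      have hden : ((lam i).den : ℚ) * lam i = (lam i).num := by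
        rw [mul_comm]; exact_mod_cast Rat.mul_den_eq_num (lam i)
      calc (m i : ℚ) = (N / (lam i).den : ℕ) * (lam i).num.toNat := by push_cast [hm]; ring
        _ = (N / (lam i).den : ℕ) * (((lam i).den : ℚ) * lam i) := by rw [hden, hnum]
        _ = (((N / (lam i).den : ℕ) : ℚ) * (lam i).den) * lam i := by ring
        _ = (N : ℚ) * lam i := by rw [← Nat.cast_mul, hc]
    refine ⟨N, hN1, m, ?_⟩
    funext j
    have hQ : (N : ℚ) * (q j : ℚ) = ∑ i, (m i : ℚ) * (v i j : ℚ) := by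
      rw [hco j, Finset.mul_sum]
      exact Finset.sum_congr rfl fun i _ => by rw [← mul_assoc, ← hmQ i]
    simp only [Pi.smul_apply, smul_eq_mul, Finset.sum_apply]
    exact_mod_cast hQ
  · -- generation
    intro q n hn m hq
    set f : κ → ℕ := fun i => m i / n with hf
    set r : ι → ℤ := q - ∑ i, (f i : ℤ) • v i with hr
    have hn0 : (n : ℚ) ≠ 0 := by positivity
    have hqQ : ∀ j, (n : ℚ) * (q j : ℚ) = ∑ i, (m i : ℚ) * (v i j : ℚ) := by
      intro j
      have h1 := congrFun hq j
      simp only [Pi.smul_apply, smul_eq_mul, Finset.sum_apply] at h1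
      exact_mod_cast h1
    have hrD : r ∈ Dset := by
      refine ⟨fun i => ((m i % n : ℕ) : ℚ) / n, fun i => ⟨by positivity, ?_⟩, ?_⟩
      · rw [div_le_one (by positivity)]
        exact_mod_cast (Nat.mod_lt _ (by omega)).le
      · intro j
        have hrj : (r j : ℚ) = (q j : ℚ) - ∑ i, (f i : ℚ) * (v i j : ℚ) := by
          rw [hr]
          simp only [Pi.sub_apply, Finset.sum_apply, Pi.smul_apply, smul_eq_mul]
          push_cast
          ring
        apply mul_left_cancel₀ hn0
        rw [hrj, mul_sub, hqQ j, Finset.mul_sum, Finset.mul_sum, ← Finset.sum_sub_distrib]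
        refine Finset.sum_congr rfl fun i _ => ?_
        have hdm : (m i : ℚ) = n * (f i : ℚ) + ((m i % n : ℕ) : ℚ) := by
          exact_mod_cast (Nat.div_add_mod (m i) n).symm
        rw [hdm]
        field_simp
        ring
    refine ⟨r, hfin.mem_toFinset.2 hrD, f, by rw [hr, sub_add_cancel]⟩

end Gordan

section Main
variable {G : Type*} [CommGroupWithZero G]

lemma main_aux (A : Submonoid G) {κ : Type*} [Fintype κ] [DecidableEq κ]
    (a : κ → G) (haA : ∀ i, a i ∈ A) (ha0 : ∀ i, a i ≠ 0)
    (hrepA : ∀ x ∈ A, x ≠ 0 → ∃ m : κ → ℕ, x = ∏ i, a i ^ m i)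
    (hrepG : ∀ g : G, g ≠ 0 → ∃ c : κ → ℤ, g = Epow a c) :
    ∃ t : Finset G, ↑t ⊆ monNor (A : Set G) ∧
      ∀ x ∈ monNor (A : Set G), x = 0 ∨ x ∈ Submonoid.closure (↑t : Set G) := by
  classical
  letI : NoZeroSMulDivisors ℤ ((κ → ℤ) ⧸ satRel a ha0) := noZeroSMulDivisors_satRel a ha0
  letI : Module.Free ℤ ((κ → ℤ) ⧸ satRel a ha0) := Module.free_of_finite_type_torsion_free'
  set L := satRel a ha0 with hLdef
  set ι := Module.Free.ChooseBasisIndex ℤ ((κ → ℤ) ⧸ satRel a ha0) with hι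
  set ψ : ((κ → ℤ) ⧸ satRel a ha0) ≃ₗ[ℤ] (ι → ℤ) :=
    (Module.Free.chooseBasis ℤ ((κ → ℤ) ⧸ satRel a ha0)).repr ≪≫ₗ
      Finsupp.linearEquivFunOnFinite ℤ ℤ ι with hψ
  set φ : (κ → ℤ) →ₗ[ℤ] (ι → ℤ) := ψ.toLinearMap ∘ₗ L.mkQ with hφdef
  set v : κ → (ι → ℤ) := fun i => φ (Pi.single i 1) with hv
  have hker : ∀ c : κ → ℤ, φ c = 0 ↔ c ∈ L := by
    intro c
    rw [hφdef]
    simp only [LinearMap.coe_comp, Function.comp_apply, LinearEquiv.coe_coe,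
      LinearEquiv.map_eq_zero_iff, Submodule.mkQ_apply, Submodule.Quotient.mk_eq_zero]
  have hφ : ∀ c : κ → ℤ, φ c = ∑ i, c i • v i := by
    intro c
    have hc : c = ∑ i, c i • Pi.single i (1:ℤ) := by
      funext j
      rw [Finset.sum_apply]
      simp [Pi.single_apply]
    conv_lhs => rw [hc]
    rw [map_sum]
    exact Finset.sum_congr rfl fun i _ => map_smul φ _ _
  have hApow : ∀ m : κ → ℕ, (∏ i, a i ^ m i) ∈ A :=
    fun m => prod_mem fun i _ => pow_mem (haA i) _
  -- key: cone condition implies membership in the normalization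
  have keyNor : ∀ (c : κ → ℤ) (N : ℕ), 1 ≤ N → ∀ m : κ → ℕ,
      ((N:ℤ) • φ c = ∑ i, ((m i : ℤ)) • v i) → Epow a c ∈ monNor (A : Set G) := by
    intro c N hN m hc
    have h1 : φ ((N:ℤ) • c - (fun i => (m i : ℤ))) = 0 := by
      rw [map_sub, map_smul, hφ (fun i => (m i:ℤ)), hc, sub_self]
    rw [hker] at h1
    obtain ⟨M, hM, hM1⟩ := h1
    have hxy : Epow a ((N:ℤ) • c) =
        Epow a ((N:ℤ) • c - (fun i => (m i : ℤ))) * Epow a (fun i => (m i : ℤ)) := by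
      rw [← Epow_add ha0, sub_add_cancel]
    refine ⟨N * M, Nat.one_le_iff_ne_zero.2 (by positivity), ?_⟩
    have h2 : Epow a c ^ (N * M) = Epow a (fun i => (m i : ℤ)) ^ M := by
      rw [pow_mul, Epow_pow, hxy, mul_pow, hM1, one_mul]
    rw [h2, Epow_nat]
    exact A.pow_mem (hApow m) M
  -- torsion part
  obtain ⟨S, hS⟩ := IsNoetherian.noetherian L
  have hSL : ∀ d ∈ S, d ∈ L := fun d hd => hS ▸ Submodule.subset_span hd
  choose Md hMd1 hMd2 using fun d : {x // x ∈ S} => mem_satRel.1 (hSL d.1 d.2)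
  set Tfin : Finset G := (Fintype.piFinset fun d : {x // x ∈ S} => Finset.range (Md d)).image
      (fun e => ∏ d : {x // x ∈ S}, Epow a (d : κ → ℤ) ^ e d) with hTfin
  have hTnor : ∀ τ ∈ Tfin, τ ∈ monNor (A : Set G) := by
    intro τ hτ
    obtain ⟨e, _, rfl⟩ := Finset.mem_image.1 hτ
    refine (norSub A).prod_mem fun d _ => (norSub A).pow_mem ?_ _
    exact ⟨Md d, hMd1 d, by rw [hMd2 d]; exact A.one_mem⟩
  have hTmem : ∀ c ∈ L, Epow a c ∈ Tfin := by
    intro c hc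
    rw [← hS, Submodule.mem_span_finset] at hc
    obtain ⟨f, -, hf⟩ := hc
    have hc' : c = ∑ d : {x // x ∈ S}, f (d : κ → ℤ) • (d : κ → ℤ) := by
      rw [Finset.sum_coe_sort S (fun d => f d • d), hf]
    have hEc : Epow a c = ∏ d : {x // x ∈ S}, Epow a (d : κ → ℤ) ^ (f (d : κ → ℤ)) := by
      rw [hc', Epow_sum ha0]
      exact Finset.prod_congr rfl fun d _ => Epow_zsmul _ _
    rw [hEc, hTfin, Finset.mem_image]
    refine ⟨fun d => ((f (d : κ → ℤ)) % (Md d)).toNat, ?_, ?_⟩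
    · rw [Fintype.mem_piFinset]
      intro d
      rw [Finset.mem_range]
      have h1 : (0:ℤ) < Md d := by exact_mod_cast hMd1 d
      have h2 := Int.emod_nonneg (f (d : κ → ℤ)) (by omega : (Md d : ℤ) ≠ 0)
      have h3 := Int.emod_lt_of_pos (f (d : κ → ℤ)) h1
      omega
    · exact Finset.prod_congr rfl fun d _ =>
        (zpow_reduce (hMd1 d) (hMd2 d) (f (d : κ → ℤ))).symm
  -- the Gordan finite set and its lifts
  obtain ⟨D, hD1, hD2⟩ := gordan v
  choose cq hcq using fun q : {x // x ∈ D} =>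
    Submodule.Quotient.mk_surjective L (ψ.symm (q : ι → ℤ))
  have hφcq : ∀ q : {x // x ∈ D}, φ (cq q) = (q : ι → ℤ) := by
    intro q
    rw [hφdef]
    simp only [LinearMap.coe_comp, Function.comp_apply, LinearEquiv.coe_coe,
      Submodule.mkQ_apply]
    rw [hcq q, LinearEquiv.apply_symm_apply]
  set Dlift : Finset G := D.attach.image (fun q => Epow a (cq q)) with hDlift
  have hDnor : ∀ x ∈ Dlift, x ∈ monNor (A : Set G) := by
    intro x hx
    obtain ⟨q, _, rfl⟩ := Finset.mem_image.1 hx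
    obtain ⟨N, hN, m, hvq⟩ := hD1 q.1 q.2
    exact keyNor (cq q) N hN m (by rw [hφcq q]; exact hvq)
  refine ⟨(Finset.univ.image a ∪ Tfin) ∪ Dlift, ?_, ?_⟩
  · intro x hx
    rcases Finset.mem_union.1 hx with hx | hx
    · rcases Finset.mem_union.1 hx with hx | hx
      · obtain ⟨i, _, rfl⟩ := Finset.mem_image.1 hx
        exact mem_monNor_of_mem (haA i)
      · exact hTnor x hx
    · exact hDnor x hx
  · intro x hx
    by_cases hx0 : x = 0
    · exact Or.inl hx0
    right
    obtain ⟨n, hn, hxn⟩ := hx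
    have hxn0 : x ^ n ≠ 0 := pow_ne_zero _ hx0
    obtain ⟨m, hm⟩ := hrepA _ hxn hxn0
    obtain ⟨c, hc⟩ := hrepG x hx0
    have hEm : Epow a (fun i => (m i : ℤ)) = x ^ n := by rw [Epow_nat, ← hm]
    have h1 : ((n:ℤ) • c - (fun i => (m i : ℤ))) ∈ L := by
      refine ⟨1, le_refl 1, ?_⟩
      rw [pow_one, Epow_sub ha0, ← Epow_pow, ← hc, hEm, mul_inv_cancel₀ hxn0]
    have h2 : (n:ℤ) • φ c = ∑ i, (m i : ℤ) • v i := by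
      have h0 : φ ((n:ℤ) • c - (fun i => (m i : ℤ))) = 0 := (hker _).2 h1
      rw [map_sub, map_smul, hφ (fun i => (m i : ℤ)), sub_eq_zero] at h0
      exact h0
    obtain ⟨r, hrD, f, hqrf⟩ := hD2 (φ c) n hn m h2
    set rq : {x // x ∈ D} := ⟨r, hrD⟩ with hrq
    set w : κ → ℤ := c - cq rq - (fun i => (f i : ℤ)) with hw
    have hwL : w ∈ L := by
      rw [← hker, hw, map_sub, map_sub, hφcq rq, hφ (fun i => (f i : ℤ)), hqrf]
      simp [hrq]
    have hx' : x = Epow a w * Epow a (cq rq) * Epow a (fun i => (f i : ℤ)) := by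
      rw [← Epow_add ha0, ← Epow_add ha0, hc]
      congr 1
      rw [hw]
      abel
    rw [hx']
    refine mul_mem (mul_mem ?_ ?_) ?_
    · exact Submonoid.subset_closure (Finset.mem_coe.2 (Finset.mem_union.2 (Or.inl
        (Finset.mem_union.2 (Or.inr (hTmem w hwL))))))
    · refine Submonoid.subset_closure (Finset.mem_coe.2 (Finset.mem_union.2 (Or.inr ?_)))
      rw [hDlift, Finset.mem_image]
      exact ⟨rq, D.mem_attach rq, rfl⟩
    · rw [Epow_nat]
      refine prod_mem fun i _ => pow_mem (Submonoid.subset_closure ?_) _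
      exact Finset.mem_coe.2 (Finset.mem_union.2 (Or.inl (Finset.mem_union.2 (Or.inl
        (Finset.mem_image.2 ⟨i, Finset.mem_univ i, rfl⟩)))))

end Main

section Cover
variable {G : Type*} [CommGroupWithZero G]

lemma finite_cover (A : Submonoid G) (hA0 : (0:G) ∈ A) (t : Finset G)
    (ht : ↑t ⊆ monNor (A : Set G))
    (hgen : ∀ x ∈ monNor (A : Set G), x = 0 ∨ x ∈ Submonoid.closure (↑t : Set G)) :
    ∃ u : Finset G, ↑u ⊆ monNor (A : Set G) ∧
      ∀ x ∈ monNor (A : Set G), ∃ b ∈ u, ∃ a ∈ A, x = a * b := by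
  classical
  choose n hn1 hn2 using fun b : {x // x ∈ t} => ht b.2
  set u : Finset G := (Fintype.piFinset fun b : {x // x ∈ t} => Finset.range (n b)).image
      (fun e => ∏ b : {x // x ∈ t}, (b : G) ^ e b) with hu
  have hmemmon : ∀ b : {x // x ∈ t}, (b : G) ∈ norSub A := fun b => ht b.2
  have hu_sub : ↑u ⊆ monNor (A : Set G) := by
    intro x hx
    obtain ⟨e, _, rfl⟩ := Finset.mem_image.1 hx
    exact (norSub A).prod_mem fun b _ => (norSub A).pow_mem (hmemmon b) _
  have h1u : (1 : G) ∈ u := by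
    rw [hu, Finset.mem_image]
    refine ⟨fun _ => 0, ?_, by simp⟩
    rw [Fintype.mem_piFinset]
    exact fun b => Finset.mem_range.2 (hn1 b)
  refine ⟨u, hu_sub, ?_⟩
  intro x hx
  have hcover : ∀ y ∈ Submonoid.closure (↑t : Set G),
      ∃ aa ∈ A, ∃ e : {x // x ∈ t} → ℕ, (∀ b, e b < n b) ∧
        y = aa * ∏ b : {x // x ∈ t}, (b : G) ^ e b := by
    intro y hy
    induction hy using Submonoid.closure_induction with
    | mem z hz =>
      by_cases h1 : n ⟨z, hz⟩ = 1
      · refine ⟨z, ?_, fun _ => 0, fun b => hn1 b, by simp⟩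
        have h2 := hn2 (⟨z, hz⟩ : {x // x ∈ t})
        rw [h1, pow_one] at h2
        exact h2
      · refine ⟨1, A.one_mem, Pi.single ⟨z, hz⟩ 1, ?_, ?_⟩
        · intro b
          by_cases hb : b = ⟨z, hz⟩
          · rw [hb, Pi.single_eq_same]
            have := hn1 (⟨z, hz⟩ : {x // x ∈ t})
            omega
          · rw [Pi.single_eq_of_ne hb]
            exact hn1 b
        · rw [one_mul, Fintype.prod_eq_single (⟨z, hz⟩ : {x // x ∈ t})
            (fun b hb => by rw [Pi.single_eq_of_ne hb, pow_zero])]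
          rw [Pi.single_eq_same, pow_one]
    | one =>
      exact ⟨1, A.one_mem, fun _ => 0, fun b => hn1 b, by simp⟩
    | mul z w hz hw ihz ihw =>
      obtain ⟨a1, ha1, e1, he1, rfl⟩ := ihz
      obtain ⟨a2, ha2, e2, he2, rfl⟩ := ihw
      set c : {x // x ∈ t} → ℕ := fun b => e1 b + e2 b with hcdef
      have key : ∀ b : {x // x ∈ t}, (b : G) ^ c b =
          ((b : G) ^ n b) ^ (c b / n b) * (b : G) ^ (c b % n b) := by
        intro b
        rw [← pow_mul, ← pow_add, Nat.div_add_mod]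
      refine ⟨a1 * a2 * ∏ b : {x // x ∈ t}, ((b : G) ^ n b) ^ (c b / n b),
        A.mul_mem (A.mul_mem ha1 ha2) (prod_mem fun b _ => A.pow_mem (hn2 b) _),
        fun b => c b % n b, fun b => Nat.mod_lt _ (hn1 b), ?_⟩
      have h4 : (∏ b : {x // x ∈ t}, (b:G) ^ e1 b) * (∏ b : {x // x ∈ t}, (b:G) ^ e2 b) =
          ∏ b : {x // x ∈ t}, (b:G) ^ c b := by
        rw [← Finset.prod_mul_distrib]
        exact Finset.prod_congr rfl fun b _ => by rw [hcdef, ← pow_add]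
      have h3 : ∏ b : {x // x ∈ t}, (b:G) ^ c b =
          (∏ b : {x // x ∈ t}, ((b:G) ^ n b) ^ (c b / n b)) *
            ∏ b : {x // x ∈ t}, (b:G) ^ (c b % n b) := by
        rw [← Finset.prod_mul_distrib]
        exact Finset.prod_congr rfl fun b _ => key b
      calc (a1 * ∏ b : {x // x ∈ t}, (b:G) ^ e1 b) * (a2 * ∏ b : {x // x ∈ t}, (b:G) ^ e2 b)
          = (a1 * a2) * ((∏ b : {x // x ∈ t}, (b:G) ^ e1 b) *
              (∏ b : {x // x ∈ t}, (b:G) ^ e2 b)) := mul_mul_mul_comm a1 _ a2 _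
        _ = _ := by rw [h4, h3, ← mul_assoc]
  rcases hgen x hx with rfl | hx'
  · exact ⟨1, h1u, 0, hA0, (zero_mul 1).symm⟩
  · obtain ⟨aa, haa, e, he, rfl⟩ := hcover x hx'
    refine ⟨∏ b : {x // x ∈ t}, (b : G) ^ e b, ?_, aa, haa, rfl⟩
    rw [hu, Finset.mem_image]
    exact ⟨e, Fintype.mem_piFinset.2 fun b => Finset.mem_range.2 (he b), rfl⟩

end Cover

/-- Let `A` be a finitely generated cancellative pointed
commutative monoid (modelled as a submonoid, containing `0`, of its pointed
group completion `G`, a commutative group with zero generated by fractions of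
elements of `A`). Then the normalization `A_nor` is finitely generated as a
pointed monoid; consequently the inclusion `A → A_nor` is a finite morphism
(`A_nor` is a finite union of sets `A·bᵢ`). -/
theorem normalization_fg_and_finite {G : Type*} [CommGroupWithZero G]
    (A : Submonoid G) (hA0 : (0 : G) ∈ A)
    (hgen : ∀ g : G, g ≠ 0 → ∃ a ∈ A, ∃ b ∈ A, b ≠ 0 ∧ g = a * b⁻¹)
    (hfg : ∃ s : Finset G, ↑s ⊆ (A : Set G) ∧
      ∀ a ∈ A, a = 0 ∨ a ∈ Submonoid.closure (↑s : Set G)) :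
    (∃ t : Finset G, ↑t ⊆ monNor (A : Set G) ∧
      ∀ x ∈ monNor (A : Set G), x = 0 ∨ x ∈ Submonoid.closure (↑t : Set G)) ∧
    (∃ u : Finset G, ↑u ⊆ monNor (A : Set G) ∧
      ∀ x ∈ monNor (A : Set G), ∃ b ∈ u, ∃ a ∈ A, x = a * b) := by
  classical
  obtain ⟨s, hsA, hsgen⟩ := hfg
  set s' : Finset G := s.erase 0 with hs'
  have hsub : ∀ x ∈ Submonoid.closure (↑s : Set G),
      x = 0 ∨ x ∈ Submonoid.closure (↑s' : Set G) := by
    intro x hx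
    induction hx using Submonoid.closure_induction with
    | mem z hz =>
      by_cases hz0 : z = 0
      · exact Or.inl hz0
      · exact Or.inr (Submonoid.subset_closure
          (Finset.mem_coe.2 (Finset.mem_erase.2 ⟨hz0, Finset.mem_coe.1 hz⟩)))
    | one => exact Or.inr (Submonoid.one_mem _)
    | mul z w _ _ ihz ihw =>
      rcases ihz with rfl | hz'
      · exact Or.inl (zero_mul w)
      rcases ihw with rfl | hw'
      · exact Or.inl (mul_zero z)
      exact Or.inr (mul_mem hz' hw')
  set a : {x : G // x ∈ s'} → G := fun i => (i : G) with ha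
  have haA : ∀ i, a i ∈ A := fun i => hsA (Finset.mem_coe.2 (Finset.mem_of_mem_erase i.2))
  have ha0 : ∀ i, a i ≠ 0 := fun i => Finset.ne_of_mem_erase i.2
  have hrepc : ∀ x ∈ Submonoid.closure (↑s' : Set G),
      ∃ m : {x : G // x ∈ s'} → ℕ, x = ∏ i, a i ^ m i := by
    intro x hx
    induction hx using Submonoid.closure_induction with
    | mem z hz =>
      refine ⟨Pi.single ⟨z, Finset.mem_coe.1 hz⟩ 1, ?_⟩
      rw [Fintype.prod_eq_single (⟨z, Finset.mem_coe.1 hz⟩ : {x : G // x ∈ s'})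
        (fun b hb => by rw [Pi.single_eq_of_ne hb, pow_zero])]
      rw [Pi.single_eq_same, pow_one, ha]
    | one => exact ⟨0, by simp⟩
    | mul z w _ _ ihz ihw =>
      obtain ⟨m1, rfl⟩ := ihz
      obtain ⟨m2, rfl⟩ := ihw
      refine ⟨m1 + m2, ?_⟩
      rw [← Finset.prod_mul_distrib]
      exact Finset.prod_congr rfl fun i _ => by rw [Pi.add_apply, pow_add]
  have hrepA : ∀ x ∈ A, x ≠ 0 → ∃ m : {x : G // x ∈ s'} → ℕ, x = ∏ i, a i ^ m i := by
    intro x hxA hx0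
    rcases hsgen x hxA with rfl | hx
    · exact absurd rfl hx0
    rcases hsub x hx with rfl | hx'
    · exact absurd rfl hx0
    exact hrepc x hx'
  have hrepG : ∀ g : G, g ≠ 0 → ∃ c : {x : G // x ∈ s'} → ℤ, g = Epow a c := by
    intro g hg
    obtain ⟨x, hxA, y, hyA, hy0, rfl⟩ := hgen g hg
    have hx0 : x ≠ 0 := by
      rintro rfl
      rw [zero_mul] at hg
      exact hg rfl
    obtain ⟨mx, hmx⟩ := hrepA x hxA hx0
    obtain ⟨my, hmy⟩ := hrepA y hyA hy0
    refine ⟨(fun i => (mx i : ℤ)) - (fun i => (my i : ℤ)), ?_⟩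
    rw [Epow_sub ha0, Epow_nat, Epow_nat, ← hmx, ← hmy]
  obtain ⟨t, ht1, ht2⟩ := main_aux A a haA ha0 hrepA hrepG
  exact ⟨⟨t, ht1, ht2⟩, finite_cover A hA0 t ht1 ht2⟩
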